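/- arXiv:2604.23517 — 4 statements merged into one kernel-verified Lean document; each statement's English description precedes it below -/
import Mathlib

section
/- Let g be the Dirichlet inverse of ω + 1 and C_Ω(n) = Ω(n)! ∏_{p^α || n} (1/α!). Then for every n ≥ 1, λ(n) g(n) = ∑_{d|n} C_Ω(d) μ²(n/d), where λ(n) = (-1)^{Ω(n)} is the Liouville function. -/
open ArithmeticFunction Nat
open scoped ArithmeticFunction.Omega ArithmeticFunction.omega ArithmeticFunction.Moebius ArithmeticFunction.zeta

/-- `C_Ω(n) = Ω(n)! / ∏_{p^α || n} α!`. -/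
def COmega (n : ℕ) : ℕ :=
  (cardFactors n)! / ∏ p ∈ n.primeFactors, (n.factorization p)!

lemma cardFactors_eq_sum_factorization {n : ℕ} (hn : n ≠ 0) :
    cardFactors n = ∑ p ∈ n.primeFactors, n.factorization p := by
  rw [cardFactors_apply]
  have h1 : ∀ p ∈ n.primeFactors, n.factorization p
      = (n.primeFactorsList : Multiset ℕ).count p := by
    intro p _
    rw [Multiset.coe_count, Nat.primeFactorsList_count_eq]
  rw [Finset.sum_congr rfl h1, ← Nat.toFinset_factors]
  rw [show n.primeFactorsList.toFinset = (n.primeFactorsList : Multiset ℕ).toFinset from rfl]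
  rw [Multiset.toFinset_sum_count_eq]
  rfl

lemma COmega_eq_multinomial {n : ℕ} (hn : n ≠ 0) :
    COmega n = Nat.multinomial n.primeFactors n.factorization := by
  rw [COmega, Nat.multinomial, cardFactors_eq_sum_factorization hn]

/-- multinomial recurrence. -/
lemma multinomial_recurrence {α : Type*} [DecidableEq α] (s : Finset α) (f : α → ℕ)
    (hs : s.Nonempty) (hf : ∀ i ∈ s, 1 ≤ f i) :
    Nat.multinomial s f
      = ∑ i ∈ s, Nat.multinomial s (Function.update f i (f i - 1)) := by
  have hOmega : 1 ≤ ∑ i ∈ s, f i := by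
    obtain ⟨i, hi⟩ := hs
    calc 1 ≤ f i := hf i hi
    _ ≤ ∑ i ∈ s, f i := Finset.single_le_sum (fun j _ => Nat.zero_le _) hi
  have hprodpos : 0 < ∏ j ∈ s, (f j)! := by
    apply Finset.prod_pos; intro j _; exact Nat.factorial_pos _
  apply Nat.eq_of_mul_eq_mul_left hprodpos
  rw [Nat.multinomial_spec]
  rw [Finset.mul_sum]
  have hterm : ∀ i ∈ s,
      (∏ j ∈ s, (f j)!) * Nat.multinomial s (Function.update f i (f i - 1))
        = f i * (∑ j ∈ s, f j - 1)! := by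
    intro i hi
    have hfi := hf i hi
    have hprod : ∏ j ∈ s, (f j)! = f i * ∏ j ∈ s, (Function.update f i (f i - 1) j)! := by
      have hcomp : ∀ j, (Function.update f i (f i - 1) j)!
          = Function.update (fun j => (f j)!) i ((f i - 1)!) j := fun j =>
        Function.apply_update (fun _ n => n !) f i (f i - 1) j
      rw [Finset.prod_congr rfl (fun j _ => hcomp j), Finset.prod_update_of_mem hi,
        ← Finset.mul_prod_erase s (fun j => (f j)!) hi, ← mul_assoc, Finset.erase_eq]
      congr 1
      have h2 : f i = (f i - 1) + 1 := (Nat.succ_pred_eq_of_pos hfi).symm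
      rw [h2, Nat.factorial_succ]
      simp
    have hsum : ∑ j ∈ s, Function.update f i (f i - 1) j = ∑ j ∈ s, f j - 1 := by
      rw [Finset.sum_update_of_mem hi, ← Finset.add_sum_erase s f hi, Finset.erase_eq]
      omega
    rw [hprod, mul_assoc, Nat.multinomial_spec, hsum]
  rw [Finset.sum_congr rfl hterm, ← Finset.sum_mul]
  exact (Nat.mul_factorial_pred (Nat.one_le_iff_ne_zero.mp hOmega)).symm


lemma multinomial_congr' {α : Type*} [DecidableEq α] {s : Finset α} {f g : α → ℕ}
    (h : ∀ i ∈ s, f i = g i) : Nat.multinomial s f = Nat.multinomial s g := by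
  unfold Nat.multinomial
  rw [Finset.sum_congr rfl h, Finset.prod_congr rfl (fun i hi => by rw [h i hi])]

lemma multinomial_subset {α : Type*} [DecidableEq α] {s t : Finset α} {f : α → ℕ}
    (hst : t ⊆ s) (hzero : ∀ i ∈ s, i ∉ t → f i = 0) :
    Nat.multinomial s f = Nat.multinomial t f := by
  unfold Nat.multinomial
  rw [Finset.sum_subset hst hzero, Finset.prod_subset hst (fun i hi hit => by
    rw [hzero i hi hit]; rfl)]

lemma COmega_recurrence {n : ℕ} (hn : 2 ≤ n) :
    COmega n = ∑ p ∈ n.primeFactors, COmega (n / p) := by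
  have hn0 : n ≠ 0 := by omega
  rw [COmega_eq_multinomial hn0,
    multinomial_recurrence n.primeFactors n.factorization
      (Nat.nonempty_primeFactors.2 (by omega))
      (fun p hp => (Nat.mem_primeFactors.1 hp).1.factorization_pos_of_dvd hn0
        (Nat.mem_primeFactors.1 hp).2.1)]
  apply Finset.sum_congr rfl
  intro p hp
  obtain ⟨hpp, hpd, -⟩ := Nat.mem_primeFactors.1 hp
  have hm0 : n / p ≠ 0 := by
    have := Nat.div_pos (Nat.le_of_dvd (by omega) hpd) hpp.pos
    omega
  have hfact : ∀ q, (n / p).factorization q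
      = Function.update n.factorization p (n.factorization p - 1) q := by
    intro q
    rw [Nat.factorization_div hpd, hpp.factorization, Finsupp.tsub_apply]
    rcases eq_or_ne q p with rfl | hq
    · rw [Function.update_self, Finsupp.single_eq_same]
    · rw [Function.update_of_ne hq, Finsupp.single_eq_of_ne hq, Nat.sub_zero]
  rw [COmega_eq_multinomial hm0,
    ← multinomial_subset (Nat.primeFactors_mono (Nat.div_dvd_of_dvd hpd) hn0)
      (fun q _ hq => Finsupp.notMem_support_iff.1 (by rwa [Nat.support_factorization]))]
  exact (multinomial_congr' (fun q _ => hfact q)).symm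

open scoped ArithmeticFunction in
noncomputable def chiAF : ArithmeticFunction ℤ :=
  ⟨fun n => if n = 1 ∨ n.Prime then 1 else 0, by norm_num⟩

noncomputable def CLAF : ArithmeticFunction ℤ :=
  ⟨fun n => if n = 0 then 0 else (-1) ^ (cardFactors n) * COmega n, by simp⟩

lemma chiAF_apply (n : ℕ) : chiAF n = if n = 1 ∨ n.Prime then 1 else 0 := rfl

lemma CLAF_apply {n : ℕ} (hn : n ≠ 0) : CLAF n = (-1) ^ (cardFactors n) * COmega n := by
  simp [CLAF, hn, ArithmeticFunction.coe_mk]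

lemma COmega_one : COmega 1 = 1 := by simp [COmega]

lemma chi_mul_CL : chiAF * CLAF = 1 := by
  ext n
  rcases Nat.eq_zero_or_pos n with rfl | hn
  · simp
  rcases eq_or_lt_of_le (Nat.succ_le_of_lt hn) with h1 | h2
  · have : n = 1 := h1.symm
    subst this
    simp [ArithmeticFunction.mul_apply, Nat.divisorsAntidiagonal_one, chiAF_apply,
      CLAF_apply, COmega_one]
  · have hn0 : n ≠ 0 := by omega
    have hn2 : 2 ≤ n := h2
    rw [ArithmeticFunction.mul_apply,
      Nat.sum_divisorsAntidiagonal (fun d e => chiAF d * CLAF e)]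
    have hsplit : ∀ d ∈ n.divisors,
        chiAF d * CLAF (n / d)
          = (if d = 1 then CLAF (n / d) else 0) + (if d.Prime then CLAF (n / d) else 0) := by
      intro d _
      rw [chiAF_apply]
      by_cases h1 : d = 1
      · subst h1
        simp [Nat.not_prime_one]
      · by_cases hp : d.Prime <;> simp [h1, hp]
    rw [Finset.sum_congr rfl hsplit, Finset.sum_add_distrib,
      Finset.sum_ite_eq' n.divisors 1 (fun d => CLAF (n / d)),
      if_pos (Nat.one_mem_divisors.2 hn0), Nat.div_one, ← Finset.sum_filter,
      show {p ∈ n.divisors | p.Prime} = n.primeFactors from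
        (Nat.primeFactors_eq_to_filter_divisors_prime n).symm]
    have hΩ1 : 1 ≤ cardFactors n := by
      rcases Nat.exists_prime_and_dvd (by omega : n ≠ 1) with ⟨p, hp, hpd⟩
      have : p ∈ n.primeFactors := Nat.mem_primeFactors.2 ⟨hp, hpd, hn0⟩
      have := cardFactors_eq_sum_factorization hn0
      have hfp := hp.factorization_pos_of_dvd hn0 hpd
      have : n.factorization p ≤ Ω n := by
        rw [cardFactors_eq_sum_factorization hn0]
        exact Finset.single_le_sum (fun q _ => Nat.zero_le _) ‹p ∈ n.primeFactors›
      omega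
    have hterm : ∀ p ∈ n.primeFactors,
        CLAF (n / p) = (-1) ^ (cardFactors n - 1) * COmega (n / p) := by
      intro p hp
      obtain ⟨hpp, hpd, -⟩ := Nat.mem_primeFactors.1 hp
      have hm0 : n / p ≠ 0 := by
        have := Nat.div_pos (Nat.le_of_dvd (by omega) hpd) hpp.pos
        omega
      have hΩ : cardFactors n = cardFactors (n / p) + 1 := by
        conv_lhs => rw [← Nat.div_mul_cancel hpd]
        rw [cardFactors_mul hm0 hpp.pos.ne', cardFactors_apply_prime hpp]
      rw [CLAF_apply hm0]
      congr 1
      congr 1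
      omega
    rw [Finset.sum_congr rfl hterm, ← Finset.mul_sum, ← Nat.cast_sum,
      ← COmega_recurrence hn2, CLAF_apply hn0]
    have hpow : ((-1 : ℤ)) ^ cardFactors n = -(-1) ^ (cardFactors n - 1) := by
      conv_lhs => rw [show cardFactors n = (cardFactors n - 1) + 1 from by omega]
      rw [pow_succ]; ring
    rw [hpow]
    have h1 : (1 : ArithmeticFunction ℤ) n = 0 := ArithmeticFunction.one_apply_ne (by omega)
    rw [h1]
    ring

lemma liou_moebius (m : ℕ) : ((-1 : ℤ)) ^ (cardFactors m) * moebius m = (moebius m) ^ 2 := by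
  by_cases h : Squarefree m
  · rw [moebius_apply_of_squarefree h, ← pow_add, sq, ← pow_add]
  · rw [moebius_eq_zero_of_not_squarefree h]
    ring

theorem liouville_mul_g_eq_sum_COmega_sq_moebius
    (g : ℕ → ℤ)
    (hg1 : g 1 = 1)
    (hg : ∀ n : ℕ, 2 ≤ n → ∑ d ∈ n.divisors, ((cardDistinctFactors d : ℤ) + 1) * g (n / d) = 0) :
    ∀ n : ℕ, 1 ≤ n →
      (-1 : ℤ) ^ (cardFactors n) * g n =
        ∑ d ∈ n.divisors, (COmega d : ℤ) * (moebius (n / d)) ^ 2 := by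
  -- set up arithmetic functions
  have hG : ∃ G : ArithmeticFunction ℤ, (∀ k, k ≠ 0 → G k = g k) ∧ G = CLAF * (μ : ArithmeticFunction ℤ) := by
    refine ⟨⟨fun k => if k = 0 then 0 else g k, by simp⟩, fun k hk => by simp [ArithmeticFunction.coe_mk, hk], ?_⟩
    set G : ArithmeticFunction ℤ := ⟨fun k => if k = 0 then 0 else g k, by simp⟩ with hGdef
    have hζchi : ∀ k : ℕ, k ≠ 0 → ((ζ : ArithmeticFunction ℤ) * chiAF) k = (cardDistinctFactors k : ℤ) + 1 := by
      intro k hk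
      rw [ArithmeticFunction.coe_zeta_mul_apply]
      have hsplit : ∀ d ∈ k.divisors, chiAF d
          = (if d = 1 then (1 : ℤ) else 0) + (if d.Prime then 1 else 0) := by
        intro d _
        rw [chiAF_apply]
        by_cases h1 : d = 1
        · subst h1; simp [Nat.not_prime_one]
        · by_cases hp : d.Prime <;> simp [h1, hp]
      rw [Finset.sum_congr rfl hsplit, Finset.sum_add_distrib,
        Finset.sum_ite_eq' k.divisors 1 (fun _ => (1 : ℤ)),
        if_pos (Nat.one_mem_divisors.2 hk), ← Finset.sum_filter,
        show {p ∈ k.divisors | p.Prime} = k.primeFactors from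
          (Nat.primeFactors_eq_to_filter_divisors_prime k).symm]
      have : ω k = k.primeFactors.card := by
        rw [cardDistinctFactors_apply, ← Nat.toFinset_factors, List.card_toFinset]
      simp [this, add_comm]
    have key : ((ζ : ArithmeticFunction ℤ) * chiAF) * G = 1 := by
      ext k
      rcases Nat.eq_zero_or_pos k with rfl | hk
      · simp
      rw [ArithmeticFunction.mul_apply,
        Nat.sum_divisorsAntidiagonal (fun d e => ((ζ : ArithmeticFunction ℤ) * chiAF) d * G e)]
      have hterm : ∀ d ∈ k.divisors,
          ((ζ : ArithmeticFunction ℤ) * chiAF) d * G (k / d)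
            = ((cardDistinctFactors d : ℤ) + 1) * g (k / d) := by
        intro d hd
        obtain ⟨hdvd, hk0⟩ := Nat.mem_divisors.1 hd
        have hd0 : d ≠ 0 := by rintro rfl; exact hk0 (Nat.zero_dvd.1 hdvd)
        have hkd0 : k / d ≠ 0 := by
          have := Nat.div_pos (Nat.le_of_dvd hk hdvd) (Nat.pos_of_ne_zero hd0)
          omega
        rw [hζchi d hd0]
        congr 1
        simp [hGdef, ArithmeticFunction.coe_mk, hkd0]
      rw [Finset.sum_congr rfl hterm]
      rcases eq_or_lt_of_le (Nat.succ_le_of_lt hk) with h1 | h2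
      · have : k = 1 := h1.symm
        subst this
        simp [hg1]
      · rw [hg k h2, ArithmeticFunction.one_apply_ne (by omega : k ≠ 1)]
    have key2 : ((ζ : ArithmeticFunction ℤ) * chiAF) * (CLAF * (μ : ArithmeticFunction ℤ)) = 1 := by
      calc ((ζ : ArithmeticFunction ℤ) * chiAF) * (CLAF * (μ : ArithmeticFunction ℤ))
          = ((ζ : ArithmeticFunction ℤ) * (μ : ArithmeticFunction ℤ)) * (chiAF * CLAF) := by ring
        _ = 1 := by rw [chi_mul_CL, ArithmeticFunction.coe_zeta_mul_moebius, mul_one]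
    calc G = 1 * G := (one_mul G).symm
      _ = ((CLAF * (μ : ArithmeticFunction ℤ)) * ((ζ : ArithmeticFunction ℤ) * chiAF)) * G := by
          rw [mul_comm (CLAF * _) _, key2]
      _ = (CLAF * (μ : ArithmeticFunction ℤ)) * (((ζ : ArithmeticFunction ℤ) * chiAF) * G) := by ring
      _ = CLAF * (μ : ArithmeticFunction ℤ) := by rw [key, mul_one]
  obtain ⟨G, hGeq, hGCL⟩ := hG
  intro n hn
  have hn0 : n ≠ 0 := by omega
  rw [← hGeq n hn0, hGCL, ArithmeticFunction.mul_apply,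
    Nat.sum_divisorsAntidiagonal (fun d e => CLAF d * (μ : ArithmeticFunction ℤ) e),
    Finset.mul_sum]
  apply Finset.sum_congr rfl
  intro d hd
  obtain ⟨hdvd, -⟩ := Nat.mem_divisors.1 hd
  have hd0 : d ≠ 0 := by rintro rfl; exact hn0 (Nat.zero_dvd.1 hdvd)
  have hkd0 : n / d ≠ 0 := by
    have := Nat.div_pos (Nat.le_of_dvd (by omega) hdvd) (Nat.pos_of_ne_zero hd0)
    omega
  have hΩ : cardFactors n = cardFactors d + cardFactors (n / d) := by
    conv_lhs => rw [← Nat.mul_div_cancel' hdvd]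
    exact cardFactors_mul hd0 hkd0
  rw [CLAF_apply hd0, hΩ, pow_add]
  have : (-1 : ℤ) ^ Ω d * (-1 : ℤ) ^ Ω (n / d) * ((-1 : ℤ) ^ Ω d * ↑(COmega d) * μ (n / d))
      = ((-1 : ℤ) ^ Ω d * (-1 : ℤ) ^ Ω d) * (COmega d : ℤ) * ((-1 : ℤ) ^ Ω (n / d) * μ (n / d)) := by
    ring
  rw [this, liou_moebius, ← pow_add, ← two_mul, pow_mul, neg_one_sq, one_pow, one_mul]
end

section
/- Let g be the Dirichlet inverse of ω + 1. For every squarefree integer n ≥ 1, g(n) = (-1)^{ω(n)} ∑_{m=0}^{ω(n)} C(ω(n), m) · m!, where C(k,m) denotes the binomial coefficient. -/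
open ArithmeticFunction Nat Finset
open scoped ArithmeticFunction.omega

private def A (k : ℕ) : ℤ := ∑ m ∈ range (k+1), (k.choose m : ℤ) * (m ! : ℤ)

private lemma A_zero : A 0 = 1 := by simp [A]

private lemma A_succ (k : ℕ) : A (k+1) = (k+1) * A k + 1 := by
  unfold A
  rw [Finset.sum_range_succ', Finset.mul_sum]
  simp only [Nat.choose_zero_right, Nat.factorial_zero, Nat.cast_one, one_mul, mul_one]
  congr 1
  refine Finset.sum_congr rfl fun i _ => ?_
  have h' : ((k+1) * k.choose i : ℤ) = ((k+1).choose (i+1) * (i+1) : ℤ) := by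
    exact_mod_cast Nat.add_one_mul_choose_eq k i
  rw [Nat.factorial_succ]
  push_cast
  linear_combination (-(i ! : ℤ)) * h'

private def U (k : ℕ) : ℤ := ∑ m ∈ range (k+1), (-1)^m * (k.choose m : ℤ) * A m
private def V (k : ℕ) : ℤ := ∑ m ∈ range (k+1), (-1)^m * (k.choose m : ℤ) * A (m+1)

private lemma U_succ (k : ℕ) : U (k+1) = U k - V k := by
  unfold U V
  rw [Finset.sum_range_succ' (fun m => (-1:ℤ)^m * ((k+1).choose m : ℤ) * A m)]
  rw [Finset.sum_range_succ' (fun m => (-1:ℤ)^m * ((k).choose m : ℤ) * A m)]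
  have split : ∀ i ∈ range (k+1), (-1:ℤ)^(i+1) * ((k+1).choose (i+1) : ℤ) * A (i+1)
      = (-((-1:ℤ)^i * (k.choose i : ℤ) * A (i+1)))
        + (-1:ℤ)^(i+1) * (k.choose (i+1) : ℤ) * A (i+1) := by
    intro i _; rw [Nat.choose_succ_succ]; push_cast; ring
  rw [Finset.sum_congr rfl split, Finset.sum_add_distrib, Finset.sum_neg_distrib,
    Finset.sum_range_succ (fun i => (-1:ℤ)^(i+1) * (k.choose (i+1) : ℤ) * A (i+1))]
  simp [Nat.choose_succ_self]
  ring

private lemma W_eq (k : ℕ) :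
    ∑ m ∈ range (k+2), (-1:ℤ)^m * ((m : ℤ) * ((k+1).choose m : ℤ)) * A m = -((k:ℤ)+1) * V k := by
  rw [Finset.sum_range_succ' (fun m => (-1:ℤ)^m * ((m : ℤ) * ((k+1).choose m : ℤ)) * A m)]
  simp only [Nat.cast_zero, zero_mul, mul_zero, zero_add, add_zero]
  unfold V
  rw [neg_mul, Finset.mul_sum, ← Finset.sum_neg_distrib]
  refine Finset.sum_congr rfl fun i _ => ?_
  have h' : ((k+1) * k.choose i : ℤ) = ((k+1).choose (i+1) * (i+1) : ℤ) := by
    exact_mod_cast Nat.add_one_mul_choose_eq k i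
  push_cast
  linear_combination ((-1:ℤ)^i * A (i+1)) * h'

private lemma V_succ (k : ℕ) : V (k+1) = U (k+1) - ((k:ℤ)+1) * V k := by
  have h1 : V (k+1) = (∑ m ∈ range (k+2), (-1:ℤ)^m * ((k+1).choose m : ℤ)
      * ((m:ℤ)+1) * A m) + ∑ m ∈ range (k+2), (-1:ℤ)^m * ((k+1).choose m : ℤ) := by
    unfold V
    rw [← Finset.sum_add_distrib]
    refine Finset.sum_congr rfl fun m _ => ?_
    rw [A_succ m]; push_cast; ring
  rw [h1, show (k+2) = (k+1)+1 from rfl,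
    Int.alternating_sum_range_choose_of_ne (Nat.succ_ne_zero k), add_zero]
  have h2 : ∀ m ∈ range (k+2), (-1:ℤ)^m * ((k+1).choose m : ℤ) * ((m:ℤ)+1) * A m
      = (-1:ℤ)^m * ((k+1).choose m : ℤ) * A m
        + (-1:ℤ)^m * ((m:ℤ) * ((k+1).choose m : ℤ)) * A m := by
    intro m _; ring
  rw [Finset.sum_congr rfl h2, Finset.sum_add_distrib, W_eq k]
  unfold U; ring

private lemma U_eq : ∀ k, U k = (-1)^k * (k ! : ℤ) ∧ V k = (-1)^k * (k ! : ℤ) * ((k:ℤ)+2) := by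
  intro k
  induction k with
  | zero => constructor <;> simp [U, V, A_zero, A_succ 0]
  | succ k ih =>
    have hU : U (k+1) = (-1)^(k+1) * ((k+1)! : ℤ) := by
      rw [U_succ, ih.1, ih.2, Nat.factorial_succ]
      push_cast; ring
    refine ⟨hU, ?_⟩
    rw [V_succ, hU, ih.2, Nat.factorial_succ]
    push_cast; ring

private lemma key (k : ℕ) (hk : k ≠ 0) :
    ∑ j ∈ range (k+1), ((j:ℤ)+1) * ((k.choose j : ℤ) * ((-1)^(k-j) * A (k-j))) = 0 := by
  obtain ⟨l, rfl⟩ := Nat.exists_eq_succ_of_ne_zero hk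
  rw [← Finset.sum_range_reflect]
  have h1 : ∀ m ∈ range (l+1+1),
      ((((l+1+1) - 1 - m : ℕ) : ℤ)+1) * (((l+1).choose ((l+1+1) - 1 - m) : ℤ)
        * ((-1)^((l+1)-((l+1+1) - 1 - m)) * A ((l+1)-((l+1+1) - 1 - m))))
      = (((l:ℤ)+1) - (m:ℤ) + 1) * (((l+1).choose m : ℤ) * ((-1)^m * A m)) := by
    intro m hm
    rw [Finset.mem_range] at hm
    have hm' : m ≤ l+1 := Nat.lt_succ_iff.mp hm
    have e1 : (l+1+1) - 1 - m = (l+1) - m := by omega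
    have e2 : (l+1) - ((l+1) - m) = m := Nat.sub_sub_self hm'
    have e3 : ((l+1).choose ((l+1) - m)) = (l+1).choose m := Nat.choose_symm hm'
    rw [e1, e2, e3, Nat.cast_sub hm']
    push_cast; ring
  rw [Finset.sum_congr rfl h1]
  have h2 : ∀ m ∈ range (l+1+1),
      (((l:ℤ)+1) - (m:ℤ) + 1) * (((l+1).choose m : ℤ) * ((-1)^m * A m))
      = ((l:ℤ)+2) * ((-1)^m * ((l+1).choose m : ℤ) * A m)
        - (-1:ℤ)^m * ((m:ℤ) * ((l+1).choose m : ℤ)) * A m := by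
    intro m _; ring
  rw [Finset.sum_congr rfl h2, Finset.sum_sub_distrib, W_eq l, ← Finset.mul_sum]
  have := (U_eq (l+1)).1
  unfold U at this
  rw [this, (U_eq l).2, Nat.factorial_succ]
  push_cast; ring

private lemma A_def (k : ℕ) : A k = ∑ m ∈ range (k+1), (k.choose m : ℤ) * (m ! : ℤ) := rfl

private lemma omega_eq_card (m : ℕ) : ω m = m.primeFactors.card := by
  rw [cardDistinctFactors_apply, Nat.primeFactors, List.card_toFinset]

private lemma divsum (n : ℕ) (hsq : Squarefree n) (hn : 2 ≤ n) :
    ∑ d ∈ n.divisors, ((ω d : ℤ)+1) * ((-1:ℤ)^(ω (n/d)) * A (ω (n/d))) = 0 := by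
  rw [← Nat.divisors_filter_squarefree_of_squarefree hsq,
      Nat.sum_divisors_filter_squarefree (by omega : n ≠ 0), Nat.factors_eq]
  have hPF : (↑n.primeFactorsList : Multiset ℕ).toFinset = n.primeFactors := rfl
  rw [hPF]
  set k := ω n with hk
  have step : ∀ t ∈ n.primeFactors.powerset,
      ((ω (t.val.prod) : ℤ)+1) * ((-1:ℤ)^(ω (n/(t.val.prod))) * A (ω (n/t.val.prod)))
      = ((t.card:ℤ)+1) * ((-1:ℤ)^(k - t.card) * A (k - t.card)) := by
    intro t ht
    rw [Finset.mem_powerset] at ht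
    have hprime : ∀ p ∈ t, p.Prime := fun p hp => Nat.prime_of_mem_primeFactors (ht hp)
    have hprod : t.val.prod = ∏ p ∈ t, p := by rw [Finset.prod_val]; rfl
    have hωd : ω (t.val.prod) = t.card := by
      rw [hprod, omega_eq_card, Nat.primeFactors_prod hprime]
    have hdiv : n / t.val.prod = ∏ p ∈ (n.primeFactors \ t), p := by
      rw [hprod, (Nat.prod_primeFactors_sdiff_of_squarefree hsq ht)]
    have hωnd : ω (n / t.val.prod) = k - t.card := by
      rw [hdiv, omega_eq_card, Nat.primeFactors_prod
        (fun p hp => Nat.prime_of_mem_primeFactors (Finset.mem_sdiff.mp hp).1),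
        Finset.card_sdiff_of_subset ht, hk, omega_eq_card]
    rw [hωd, hωnd]
  rw [Finset.sum_congr rfl step,
    Finset.sum_powerset_apply_card (fun j => ((j:ℤ)+1) * ((-1:ℤ)^(k - j) * A (k - j)))]
  have hcard : n.primeFactors.card = k := (omega_eq_card n).symm
  rw [hcard]
  have : ∀ j ∈ range (k+1),
      k.choose j • (((j:ℤ)+1) * ((-1:ℤ)^(k - j) * A (k - j)))
      = ((j:ℤ)+1) * ((k.choose j : ℤ) * ((-1:ℤ)^(k - j) * A (k - j))) := by
    intro j _; rw [nsmul_eq_mul]; ring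
  rw [Finset.sum_congr rfl this]
  refine key k ?_
  rw [hk, omega_eq_card]
  have : n.primeFactors.Nonempty := Nat.nonempty_primeFactors.mpr (by omega)
  simpa [Finset.card_eq_zero] using this.ne_empty

theorem g_on_squarefree
    (g : ℕ → ℤ)
    (hg1 : g 1 = 1)
    (hg : ∀ n : ℕ, 2 ≤ n → ∑ d ∈ n.divisors, ((cardDistinctFactors d : ℤ) + 1) * g (n / d) = 0) :
    ∀ n : ℕ, 1 ≤ n → Squarefree n →
      g n = (-1 : ℤ) ^ (cardDistinctFactors n) *
        ∑ m ∈ range (cardDistinctFactors n + 1),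
          ((cardDistinctFactors n).choose m : ℤ) * (m ! : ℤ) := by
  intro n
  induction n using Nat.strong_induction_on with
  | _ n ih =>
    intro h1 hsq
    rw [← A_def]
    by_cases hn1 : n = 1
    · subst hn1
      simp [hg1, cardDistinctFactors_one, A_zero]
    · have hn2 : 2 ≤ n := by omega
      have hrec := hg n hn2
      have h0 := divsum n hsq hn2
      have hdiff : ∑ d ∈ n.divisors,
          (((ω d : ℤ)+1) * g (n/d) - ((ω d : ℤ)+1) * ((-1:ℤ)^(ω (n/d)) * A (ω (n/d))))
          = g n - (-1:ℤ)^(ω n) * A (ω n) := by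
        rw [Finset.sum_eq_single 1]
        · simp [cardDistinctFactors_one]
        · intro d hd hd1
          have hdvd := Nat.dvd_of_mem_divisors hd
          have hd2 : 2 ≤ d := by
            rcases Nat.lt_or_ge d 2 with h | h
            · interval_cases d
              · exact absurd hdvd (by simp [Nat.eq_zero_of_zero_dvd]; omega)
              · exact absurd rfl hd1
            · exact h
          have hlt : n / d < n := Nat.div_lt_self (by omega) (by omega)
          have hpos : 1 ≤ n / d := Nat.one_le_iff_ne_zero.mpr
            (Nat.div_ne_zero_iff_of_dvd hdvd |>.mpr ⟨by omega, by omega⟩)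
          have hsq' : Squarefree (n / d) :=
            hsq.squarefree_of_dvd (Nat.div_dvd_of_dvd hdvd)
          have hg' := ih (n/d) hlt hpos hsq'
          rw [← A_def] at hg'
          rw [hg']; ring
        · intro h1mem
          exact absurd (Nat.one_mem_divisors.mpr (by omega)) h1mem
      rw [Finset.sum_sub_distrib, hrec, h0, sub_zero] at hdiff
      linarith [hdiff]
end

section
/- Let g be the Dirichlet inverse of ω + 1, G(x) = ∑_{n ≤ x} g(n), M(x) = ∑_{n ≤ x} μ(n), and π(x) the prime counting function. Then for every real x ≥ 1, M(x) = G(x) + ∑_{k ≤ x} g(k) π(⌊x/k⌋). -/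
open ArithmeticFunction Nat Finset

/-- The arithmetic function which is 1 at 1 and at primes, 0 elsewhere. -/
private def hAF : ArithmeticFunction ℤ :=
  ⟨fun n => if n = 1 ∨ n.Prime then 1 else 0, by simp [Nat.not_prime_zero]⟩

private lemma hAF_apply (n : ℕ) : hAF n = if n = 1 ∨ n.Prime then 1 else 0 := rfl

/-- Summatory function of `hAF` is `1 + π`. -/
private lemma sum_hAF (M : ℕ) (hM : 1 ≤ M) :
    ∑ m ∈ Icc 1 M, hAF m = 1 + (Nat.primeCounting M : ℤ) := by
  simp only [hAF_apply]
  rw [← Finset.sum_filter]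
  have hfil : (Icc 1 M).filter (fun m => m = 1 ∨ m.Prime)
      = insert 1 ((Finset.range (M + 1)).filter Nat.Prime) := by
    ext m
    simp only [Finset.mem_filter, Finset.mem_Icc, Finset.mem_insert, Finset.mem_range]
    constructor
    · rintro ⟨⟨h1, h2⟩, h3 | h3⟩
      · exact Or.inl h3
      · exact Or.inr ⟨by omega, h3⟩
    · rintro (h | ⟨h1, h2⟩)
      · exact ⟨⟨by omega, by omega⟩, Or.inl h⟩
      · exact ⟨⟨h2.two_le.trans' (by omega), by omega⟩, Or.inr h2⟩
  rw [hfil, Finset.sum_const, Finset.card_insert_of_notMem (by simp [Nat.not_prime_one])]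
  have : Nat.primeCounting M = ((Finset.range (M + 1)).filter Nat.Prime).card := by
    rw [Nat.primeCounting, Nat.primeCounting', Nat.count_eq_card_filter_range]
  rw [this]
  push_cast
  ring

/-- Dirichlet hyperbola-type double counting swap. -/
private lemma swap_sum (N : ℕ) (F : ℕ → ℕ → ℤ) :
    ∑ n ∈ Icc 1 N, ∑ d ∈ n.divisors, F d (n / d)
      = ∑ k ∈ Icc 1 N, ∑ m ∈ Icc 1 (N / k), F k m := by
  have h1 : ∀ n, ∑ d ∈ n.divisors, F d (n / d)
      = ∑ p ∈ n.divisorsAntidiagonal, F p.1 p.2 := fun n =>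
    (Nat.sum_divisorsAntidiagonal F).symm
  simp only [h1]
  rw [Finset.sum_sigma', Finset.sum_sigma']
  refine Finset.sum_nbij' (fun p => ⟨p.2.1, p.2.2⟩) (fun p => ⟨p.1 * p.2, (p.1, p.2)⟩)
    ?_ ?_ ?_ ?_ ?_
  · rintro ⟨n, a, b⟩ hp
    simp only [Finset.mem_sigma, Finset.mem_Icc, Nat.mem_divisorsAntidiagonal] at hp ⊢
    obtain ⟨⟨hn1, hnN⟩, hab, hn0⟩ := hp
    have hab0 : a * b ≠ 0 := by rw [hab]; omega
    obtain ⟨ha0, hb0⟩ := Nat.mul_ne_zero_iff.mp hab0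
    have ha : 1 ≤ a := Nat.one_le_iff_ne_zero.mpr ha0
    have hb : 1 ≤ b := Nat.one_le_iff_ne_zero.mpr hb0
    refine ⟨⟨ha, ?_⟩, hb, ?_⟩
    · calc a ≤ a * b := Nat.le_mul_of_pos_right a hb
        _ = n := hab
        _ ≤ N := hnN
    · rw [Nat.le_div_iff_mul_le ha, mul_comm]
      calc a * b = n := hab
        _ ≤ N := hnN
  · rintro ⟨k, m⟩ hp
    simp only [Finset.mem_sigma, Finset.mem_Icc] at hp
    obtain ⟨⟨hk1, hkN⟩, hm1, hmk⟩ := hp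
    have hkm : k * m ≤ N := by
      rw [mul_comm]; exact (Nat.le_div_iff_mul_le (by omega)).mp hmk
    have hne : k * m ≠ 0 := Nat.mul_ne_zero (by omega) (by omega)
    exact Finset.mem_sigma.mpr ⟨Finset.mem_Icc.mpr ⟨Nat.one_le_iff_ne_zero.mpr hne, hkm⟩,
      Nat.mem_divisorsAntidiagonal.mpr ⟨rfl, hne⟩⟩
  · rintro ⟨n, a, b⟩ hp
    simp only [Finset.mem_sigma, Finset.mem_Icc, Nat.mem_divisorsAntidiagonal] at hp
    obtain ⟨_, hab, _⟩ := hp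
    simp [hab]
  · rintro ⟨k, m⟩ _
    rfl
  · rintro ⟨n, a, b⟩ _
    rfl

set_option maxHeartbeats 1000000 in
theorem mertens_eq_G_add_sum_g_primeCounting
    (g : ℕ → ℤ)
    (hg1 : g 1 = 1)
    (hg : ∀ n : ℕ, 2 ≤ n → ∑ d ∈ n.divisors, ((cardDistinctFactors d : ℤ) + 1) * g (n / d) = 0) :
    ∀ x : ℝ, 1 ≤ x →
      ∑ n ∈ Icc 1 ⌊x⌋₊, moebius n =
        (∑ n ∈ Icc 1 ⌊x⌋₊, g n) +
          ∑ k ∈ Icc 1 ⌊x⌋₊, g k * (Nat.primeCounting ⌊x / (k : ℝ)⌋₊ : ℤ) := by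
  -- package g and ω+1 as arithmetic functions
  set g' : ArithmeticFunction ℤ := ⟨fun n => if n = 0 then 0 else g n, rfl⟩ with hg'
  set F : ArithmeticFunction ℤ :=
    ⟨fun n => if n = 0 then 0 else (cardDistinctFactors n : ℤ) + 1, rfl⟩ with hF
  have hg'apply : ∀ n, n ≠ 0 → g' n = g n := fun n hn => if_neg hn
  have hFapply : ∀ n, n ≠ 0 → F n = (cardDistinctFactors n : ℤ) + 1 := fun n hn => if_neg hn
  -- F * g' = 1
  have hFg : F * g' = 1 := by
    ext n
    rw [mul_apply, Nat.sum_divisorsAntidiagonal (fun a b => F a * g' b)]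
    rcases Nat.lt_or_ge n 2 with hn | hn
    · interval_cases n
      · simp
      · simp [hg'apply 1 one_ne_zero, hFapply 1 one_ne_zero, hg1]
    · have hn0 : n ≠ 0 := by omega
      rw [one_apply, if_neg (by omega)]
      rw [← hg n hn]
      refine Finset.sum_congr rfl fun d hd => ?_
      have hd0 : d ≠ 0 := (Nat.pos_of_mem_divisors hd).ne'
      have hnd0 : n / d ≠ 0 :=
        (Nat.div_pos (Nat.le_of_dvd (by omega) (Nat.mem_divisors.mp hd).1) (by omega)).ne'
      rw [hg'apply _ hnd0, hFapply _ hd0]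
  -- F = ζ * hAF
  have hFz : F = (ArithmeticFunction.zeta : ArithmeticFunction ℤ) * hAF := by
    ext n
    rcases Nat.eq_zero_or_pos n with h | h
    · simp [h]
    rw [coe_zeta_mul_apply, hFapply n (by omega)]
    simp only [hAF_apply]
    rw [← Finset.sum_filter]
    have hfil : n.divisors.filter (fun m => m = 1 ∨ m.Prime)
        = insert 1 n.primeFactors := by
      ext m
      simp only [Finset.mem_filter, Nat.mem_divisors, Finset.mem_insert,
        Nat.mem_primeFactors]
      constructor
      · rintro ⟨⟨h1, h2⟩, h3 | h3⟩
        · exact Or.inl h3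
        · exact Or.inr ⟨h3, h1, h2⟩
      · rintro (hm | ⟨h1, h2, h3⟩)
        · exact ⟨⟨by simp [hm], by omega⟩, Or.inl hm⟩
        · exact ⟨⟨h2, h3⟩, Or.inr h1⟩
    rw [hfil, Finset.sum_const,
      Finset.card_insert_of_notMem (by simp [Nat.not_prime_one])]
    have hω : (cardDistinctFactors n : ℤ) = (n.primeFactors.card : ℤ) := by
      rw [cardDistinctFactors_apply, Nat.primeFactors, List.card_toFinset]
    rw [hω]
    push_cast
    ring
  -- moebius = g' * hAF
  have hmu : (moebius : ArithmeticFunction ℤ) = g' * hAF := by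
    calc (moebius : ArithmeticFunction ℤ) = (F * g') * moebius := by rw [hFg, one_mul]
      _ = g' * hAF * ((ArithmeticFunction.zeta : ArithmeticFunction ℤ) * moebius) := by rw [hFz]; ring
      _ = g' * hAF := by rw [coe_zeta_mul_moebius, mul_one]
  intro x hx
  set N := ⌊x⌋₊ with hN
  have hN1 : 1 ≤ N := Nat.le_floor (by exact_mod_cast hx)
  have hμ : ∀ n, moebius n = ∑ d ∈ n.divisors, g' d * hAF (n / d) := by
    intro n
    rw [hmu, mul_apply, Nat.sum_divisorsAntidiagonal (fun a b => g' a * hAF b)]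
  calc ∑ n ∈ Icc 1 N, moebius n
      = ∑ n ∈ Icc 1 N, ∑ d ∈ n.divisors, g' d * hAF (n / d) :=
        Finset.sum_congr rfl fun n _ => hμ n
    _ = ∑ k ∈ Icc 1 N, ∑ m ∈ Icc 1 (N / k), g' k * hAF m := swap_sum N (fun k m => g' k * hAF m)
    _ = ∑ k ∈ Icc 1 N, g k * (1 + (Nat.primeCounting (N / k) : ℤ)) := by
        refine Finset.sum_congr rfl fun k hk => ?_
        rw [Finset.mem_Icc] at hk
        rw [← Finset.mul_sum, hg'apply k (by omega),
          sum_hAF (N / k) ((Nat.one_le_div_iff (by omega)).mpr hk.2)]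
    _ = (∑ n ∈ Icc 1 N, g n) +
          ∑ k ∈ Icc 1 N, g k * (Nat.primeCounting ⌊x / (k : ℝ)⌋₊ : ℤ) := by
        rw [← Finset.sum_add_distrib]
        refine Finset.sum_congr rfl fun k hk => ?_
        rw [Nat.floor_div_natCast x k, ← hN]
        ring
end

section
/- Let g be the Dirichlet inverse of ω + 1, G(x) = ∑_{n ≤ x} g(n), and M(x) = ∑_{n ≤ x} μ(n). Then for every real x ≥ 1, M(x) = G(x) + ∑_{p ≤ x, p prime} G(⌊x/p⌋). -/
open ArithmeticFunction Nat Finset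
open scoped ArithmeticFunction.omega ArithmeticFunction.Moebius ArithmeticFunction.zeta

noncomputable def chiA : ArithmeticFunction ℤ :=
  ⟨fun n => if n = 1 ∨ n.Prime then 1 else 0, by simp [Nat.not_prime_zero]⟩

lemma chiA_apply (n : ℕ) : chiA n = if n = 1 ∨ n.Prime then 1 else 0 := rfl

lemma divisors_filter_eq (n : ℕ) (hn : n ≠ 0) :
    n.divisors.filter (fun d => d = 1 ∨ d.Prime) = insert 1 n.primeFactors := by
  ext d
  simp only [mem_filter, Nat.mem_divisors, mem_insert, Nat.mem_primeFactors]
  constructor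
  · rintro ⟨⟨hd, _⟩, h1 | hp⟩
    · exact Or.inl h1
    · exact Or.inr ⟨hp, hd, hn⟩
  · rintro (rfl | ⟨hp, hd, _⟩)
    · exact ⟨⟨one_dvd n, hn⟩, Or.inl rfl⟩
    · exact ⟨⟨hd, hn⟩, Or.inr hp⟩

lemma omega_card (n : ℕ) : (ω n : ℤ) = n.primeFactors.card := by
  rw [cardDistinctFactors_apply, ← Nat.toFinset_factors, List.card_toFinset]

lemma sum_chi (n : ℕ) (hn : n ≠ 0) :
    ∑ d ∈ n.divisors, chiA d = (ω n : ℤ) + 1 := by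
  simp only [chiA_apply]
  rw [Finset.sum_boole, divisors_filter_eq n hn,
    Finset.card_insert_of_notMem (by simp [Nat.not_prime_one]), omega_card]
  push_cast
  ring

-- zeta * chi = (ω + 1)
lemma zeta_mul_chi_apply (n : ℕ) (hn : n ≠ 0) :
    ((ζ : ArithmeticFunction ℤ) * chiA) n = (ω n : ℤ) + 1 := by
  rw [show ((ζ : ArithmeticFunction ℕ) : ArithmeticFunction ℤ) * chiA = ↑ζ * chiA from rfl]
  rw [coe_zeta_mul_apply]
  exact sum_chi n hn

-- mu * (zeta * chi) = chi
lemma mu_mul_F : (μ : ArithmeticFunction ℤ) * ((ζ : ArithmeticFunction ℤ) * chiA) = chiA := by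
  rw [← mul_assoc, moebius_mul_coe_zeta, one_mul]

lemma swap_sum_s7 (N : ℕ) (f h : ℕ → ℤ) :
    ∑ n ∈ Icc 1 N, ∑ p ∈ n.divisorsAntidiagonal, f p.1 * h p.2
      = ∑ d ∈ Icc 1 N, f d * ∑ e ∈ Icc 1 (N / d), h e := by
  simp_rw [Finset.mul_sum]
  rw [Finset.sum_sigma' (Icc 1 N) (fun n => n.divisorsAntidiagonal) (fun _ p => f p.1 * h p.2),
    Finset.sum_sigma' (Icc 1 N) (fun d => Icc 1 (N / d)) (fun d e => f d * h e)]
  refine Finset.sum_nbij' (fun x => ⟨x.2.1, x.2.2⟩) (fun y => ⟨y.1 * y.2, (y.1, y.2)⟩)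
    ?_ ?_ ?_ ?_ ?_
  · rintro ⟨n, d, e⟩ hx
    simp only [Finset.mem_sigma, Finset.mem_Icc, Nat.mem_divisorsAntidiagonal] at hx ⊢
    obtain ⟨⟨h1, h2⟩, hde, hn0⟩ := hx
    have hd : 0 < d := by
      rcases Nat.eq_zero_or_pos d with h0 | h0
      · subst h0; simp at hde; omega
      · exact h0
    have he : 0 < e := by
      rcases Nat.eq_zero_or_pos e with h0 | h0
      · subst h0; simp at hde; omega
      · exact h0
    refine ⟨⟨hd, ?_⟩, he, ?_⟩
    · calc d ≤ d * e := Nat.le_mul_of_pos_right d he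
        _ = n := hde
        _ ≤ N := h2
    · rw [Nat.le_div_iff_mul_le hd, mul_comm]
      exact hde ▸ h2
  · rintro ⟨d, e⟩ hy
    simp only [Finset.mem_sigma, Finset.mem_Icc, Nat.mem_divisorsAntidiagonal] at hy ⊢
    obtain ⟨⟨h1, h2⟩, h3, h4⟩ := hy
    rw [Nat.le_div_iff_mul_le (by omega : 0 < d)] at h4
    have hdeN : d * e ≤ N := by rw [mul_comm]; exact h4
    have h1de : 1 ≤ d * e := Nat.one_le_iff_ne_zero.mpr (by positivity)
    exact ⟨⟨h1de, hdeN⟩, trivial, by positivity⟩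
  · rintro ⟨n, d, e⟩ hx
    simp only [Finset.mem_sigma, Nat.mem_divisorsAntidiagonal] at hx
    obtain ⟨_, hde, _⟩ := hx
    simp only [Sigma.mk.inj_iff]
    exact ⟨hde, heq_of_eq rfl⟩
  · rintro ⟨d, e⟩ _; rfl
  · rintro ⟨n, d, e⟩ _; rfl

noncomputable def gA (g : ℕ → ℤ) : ArithmeticFunction ℤ :=
  ⟨fun n => if n = 0 then 0 else g n, by simp⟩

lemma gA_apply (g : ℕ → ℤ) (n : ℕ) (hn : n ≠ 0) : gA g n = g n := by
  simp [gA, hn, ArithmeticFunction.coe_mk]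

noncomputable def FA : ArithmeticFunction ℤ :=
  ⟨fun n => if n = 0 then 0 else (ω n : ℤ) + 1, by simp⟩

lemma FA_apply (n : ℕ) (hn : n ≠ 0) : FA n = (ω n : ℤ) + 1 := by
  simp [FA, hn, ArithmeticFunction.coe_mk]

lemma FA_eq : FA = (ζ : ArithmeticFunction ℤ) * chiA := by
  ext n
  rcases eq_or_ne n 0 with rfl | hn
  · simp
  · rw [FA_apply n hn, zeta_mul_chi_apply n hn]

lemma FA_mul_gA (g : ℕ → ℤ) (hg1 : g 1 = 1)
    (hg : ∀ n : ℕ, 2 ≤ n → ∑ d ∈ n.divisors, ((ω d : ℤ) + 1) * g (n / d) = 0) :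
    FA * gA g = 1 := by
  ext n
  rcases eq_or_ne n 0 with rfl | hn0
  · simp
  rcases eq_or_ne n 1 with rfl | hn1
  · rw [ArithmeticFunction.mul_apply_one, FA_apply 1 one_ne_zero, gA_apply g 1 one_ne_zero,
      hg1]
    simp
  · have h2 : 2 ≤ n := by omega
    rw [ArithmeticFunction.mul_apply, ArithmeticFunction.one_apply_ne hn1]
    rw [Nat.sum_divisorsAntidiagonal (fun a b => FA a * gA g b)]
    rw [← hg n h2]
    refine Finset.sum_congr rfl fun d hd => ?_
    rw [Nat.mem_divisors] at hd
    have hd0 : d ≠ 0 := by rintro rfl; exact hn0 (Nat.eq_zero_of_zero_dvd hd.1)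
    have hnd0 : n / d ≠ 0 := Nat.div_ne_zero_iff_of_dvd hd.1 |>.mpr ⟨hn0, hd0⟩
    rw [FA_apply d hd0, gA_apply g (n / d) hnd0]

lemma mu_eq (g : ℕ → ℤ) (hg1 : g 1 = 1)
    (hg : ∀ n : ℕ, 2 ≤ n → ∑ d ∈ n.divisors, ((ω d : ℤ) + 1) * g (n / d) = 0) :
    (μ : ArithmeticFunction ℤ) = chiA * gA g := by
  calc (μ : ArithmeticFunction ℤ) = μ * 1 := (mul_one _).symm
    _ = μ * (FA * gA g) := by rw [FA_mul_gA g hg1 hg]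
    _ = (μ * FA) * gA g := (mul_assoc _ _ _).symm
    _ = chiA * gA g := by rw [FA_eq, mu_mul_F]

theorem mertens_eq_G_add_sum_primes_G
    (g : ℕ → ℤ)
    (hg1 : g 1 = 1)
    (hg : ∀ n : ℕ, 2 ≤ n → ∑ d ∈ n.divisors, ((cardDistinctFactors d : ℤ) + 1) * g (n / d) = 0)
    (G : ℝ → ℤ)
    (hG : ∀ y : ℝ, G y = ∑ n ∈ Icc 1 ⌊y⌋₊, g n) :
    ∀ x : ℝ, 1 ≤ x →
      ∑ n ∈ Icc 1 ⌊x⌋₊, moebius n =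
        G x + ∑ p ∈ (Icc 1 ⌊x⌋₊).filter Nat.Prime, G ((⌊x / (p : ℝ)⌋₊ : ℝ)) := by
  intro x hx
  set N := ⌊x⌋₊ with hNdef
  have hN : 1 ≤ N := Nat.le_floor (by exact_mod_cast hx)
  -- pointwise convolution identity
  have hmu : ∀ n ∈ Icc 1 N, (μ n : ℤ) =
      ∑ p ∈ n.divisorsAntidiagonal, chiA p.1 * (gA g) p.2 := by
    intro n hn
    rw [show (μ n : ℤ) = (chiA * gA g) n by rw [← mu_eq g hg1 hg]]
    rw [ArithmeticFunction.mul_apply]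
  rw [Finset.sum_congr rfl hmu, swap_sum_s7 N (fun d => chiA d) (fun e => gA g e)]
  -- replace gA by g in inner sums
  have hinner : ∀ d : ℕ, ∑ e ∈ Icc 1 (N / d), (gA g) e = ∑ e ∈ Icc 1 (N / d), g e := by
    intro d
    refine Finset.sum_congr rfl fun e he => ?_
    rw [Finset.mem_Icc] at he
    exact gA_apply g e (by omega)
  simp_rw [hinner, chiA_apply, ite_mul, one_mul, zero_mul, ← Finset.sum_filter]
  have hfil : (Icc 1 N).filter (fun d => d = 1 ∨ d.Prime)
      = insert 1 ((Icc 1 N).filter Nat.Prime) := by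
    ext d
    simp only [Finset.mem_filter, Finset.mem_insert, Finset.mem_Icc]
    constructor
    · rintro ⟨hd, rfl | hp⟩
      · exact Or.inl rfl
      · exact Or.inr ⟨hd, hp⟩
    · rintro (rfl | ⟨hd, hp⟩)
      · exact ⟨⟨le_refl 1, hN⟩, Or.inl rfl⟩
      · exact ⟨hd, Or.inr hp⟩
  rw [hfil, Finset.sum_insert (by simp [Nat.not_prime_one])]
  congr 1
  · rw [Nat.div_one, hG x, ← hNdef]
  · refine Finset.sum_congr rfl fun p hp => ?_
    rw [hG, Nat.floor_natCast, Nat.floor_div_natCast, ← hNdef]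
end
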